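/- Let p be a prime, q = p^k a power of p, and m ≥ 1. Let a be the least natural number with p^a > 2m − 1. Then exp_p(Sp_{2m}(F_q)) = p^a. -/

import Mathlib

open Matrix Finset

namespace SpExpAux
variable {F : Type} [Field F]

/-- The superdiagonal nilpotent matrix. -/
def Nmat (m : ℕ) (F : Type) [Field F] : Matrix (Fin m) (Fin m) F :=
  Matrix.of fun i j => if (j : ℕ) = (i : ℕ) + 1 then 1 else 0

lemma Nmat_pow (m s : ℕ) :
    (Nmat m F) ^ s = Matrix.of fun i j : Fin m =>
      if (j : ℕ) = (i : ℕ) + s then (1 : F) else 0 := by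
  induction s with
  | zero =>
    ext i j
    simp only [pow_zero, Matrix.one_apply, Matrix.of_apply, Nat.add_zero]
    by_cases h : i = j
    · simp [h]
    · rw [if_neg h, if_neg (by simpa [Fin.ext_iff, eq_comm] using h)]
  | succ s ih =>
    rw [pow_succ, ih]
    ext i j
    rw [Matrix.mul_apply]
    simp only [Matrix.of_apply, ite_mul, one_mul, zero_mul]
    by_cases hs : (i : ℕ) + s < m
    · have : ∀ k : Fin m, ((k : ℕ) = (i : ℕ) + s) = (k = ⟨(i : ℕ) + s, hs⟩) := by
        intro k; rw [Fin.ext_iff]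
      simp only [this]
      rw [Finset.sum_ite_eq' Finset.univ (⟨(i : ℕ) + s, hs⟩ : Fin m)
        (fun k => Nmat m F k j)]
      simp only [Finset.mem_univ, if_true, Nmat, Matrix.of_apply, Nat.add_assoc]
    · have h1 : ∀ k : Fin m, ¬ ((k : ℕ) = (i : ℕ) + s) := by
        intro k; have := k.isLt; omega
      simp only [h1, if_false, Finset.sum_const_zero]
      rw [if_neg]
      have := j.isLt; omega


section Size
variable (n : ℕ) (F : Type) [Field F]

/-- abbreviations in size n+1 -/
noncomputable def NN : Matrix (Fin (n+1)) (Fin (n+1)) F := Nmat (n+1) F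
noncomputable def ZZ : Matrix (Fin (n+1)) (Fin (n+1)) F := (NN n F)ᵀ
noncomputable def PP : Matrix (Fin (n+1)) (Fin (n+1)) F :=
  ∑ i ∈ Finset.range (n+1), (-(ZZ n F)) ^ i
noncomputable def EE : Matrix (Fin (n+1)) (Fin (n+1)) F :=
  Matrix.single (Fin.last n) (Fin.last n) (1 : F)

variable {n F}

lemma NN_pow_top : (NN n F) ^ (n+1) = 0 := by
  rw [NN, Nmat_pow]
  ext i j
  simp only [Matrix.of_apply, Matrix.zero_apply]
  rw [if_neg]
  have := j.isLt; omega

lemma ZZ_pow_top : (ZZ n F) ^ (n+1) = 0 := by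
  rw [ZZ, ← transpose_pow, NN_pow_top, transpose_zero]

lemma NN_pow_n : (NN n F) ^ n = Matrix.single (0 : Fin (n+1)) (Fin.last n) (1 : F) := by
  rw [NN, Nmat_pow]
  ext i j
  simp only [Matrix.of_apply, Matrix.single, Fin.ext_iff, Fin.val_last, Fin.val_zero]
  have hi := i.isLt; have hj := j.isLt
  by_cases h : (j : ℕ) = (i : ℕ) + n
  · rw [if_pos h, if_pos (by omega)]
  · rw [if_neg h, if_neg (by omega)]

lemma ZZ_pow_n : (ZZ n F) ^ n = Matrix.single (Fin.last n) (0 : Fin (n+1)) (1 : F) := by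
  rw [ZZ, ← transpose_pow, NN_pow_n]
  ext i j
  simp only [transpose_apply, Matrix.single, Matrix.of_apply]
  by_cases h1 : (0 : Fin (n+1)) = j <;> by_cases h2 : Fin.last n = i <;>
    simp [h1, h2, and_comm]

lemma PP_mul : (PP n F) * (1 + ZZ n F) = 1 := by
  have h := geom_sum_mul (-(ZZ n F)) (n+1)
  rw [neg_pow, ZZ_pow_top, mul_zero] at h
  have h2 : (-(ZZ n F) - 1) = -(1 + ZZ n F) := by abel
  rw [h2, mul_neg, zero_sub] at h
  exact neg_injective h

lemma mul_PP : (1 + ZZ n F) * (PP n F) = 1 := by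
  have h := mul_geom_sum (-(ZZ n F)) (n+1)
  rw [neg_pow, ZZ_pow_top, mul_zero] at h
  have h2 : (-(ZZ n F) - 1) = -(1 + ZZ n F) := by abel
  rw [h2, neg_mul, zero_sub] at h
  exact neg_injective h

lemma mul_PPt : (1 + NN n F) * (PP n F)ᵀ = 1 := by
  have h := congrArg Matrix.transpose (PP_mul (n := n) (F := F))
  rw [transpose_mul, transpose_add, transpose_one, ZZ, transpose_transpose] at h
  rw [h]

lemma PPZZ : (PP n F) * (ZZ n F) = 1 - PP n F := by
  have := PP_mul (n := n) (F := F)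
  rw [mul_add, mul_one, add_comm (PP n F)] at this
  exact eq_sub_of_add_eq this

lemma ZZPP : (ZZ n F) * (PP n F) = 1 - PP n F := by
  have := mul_PP (n := n) (F := F)
  rw [add_mul, one_mul, add_comm (PP n F)] at this
  exact eq_sub_of_add_eq this


lemma comm_ZP : (ZZ n F) * (PP n F) = (PP n F) * (ZZ n F) := by rw [ZZPP, PPZZ]

lemma PP_eq : PP n F = 1 - (ZZ n F) * (PP n F) := by
  rw [ZZPP]; abel

lemma PP_eq' : PP n F = 1 - (PP n F) * (ZZ n F) := by
  rw [PPZZ]; abel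

lemma PP_mul_ZZn : (PP n F) * (ZZ n F) ^ n = (ZZ n F) ^ n := by
  conv_lhs => rw [PP_eq']
  rw [sub_mul, one_mul, mul_assoc, ← pow_succ', ZZ_pow_top, mul_zero, sub_zero]

lemma std_mul_ZZ (c : F) :
    Matrix.single (0 : Fin (n+1)) (0 : Fin (n+1)) c * ZZ n F = 0 := by
  ext i j
  rw [Matrix.mul_apply, Matrix.zero_apply]
  apply Finset.sum_eq_zero
  intro k _
  simp only [Matrix.single, Matrix.of_apply, ZZ, NN, Nmat, transpose_apply, ite_mul, zero_mul]
  by_cases h : (0 : Fin (n+1)) = i ∧ (0 : Fin (n+1)) = k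
  · rcases h with ⟨hi, hk⟩
    rw [if_pos ⟨hi, hk⟩, ← hk]
    simp
  · rw [if_neg h]

lemma std_mul_PP (c : F) :
    Matrix.single (0 : Fin (n+1)) (0 : Fin (n+1)) c * PP n F
      = Matrix.single (0 : Fin (n+1)) (0 : Fin (n+1)) c := by
  conv_lhs => rw [PP_eq]
  rw [mul_sub, mul_one, ← mul_assoc, std_mul_ZZ, zero_mul, sub_zero]

lemma std_mul_PP_pow (c : F) (s : ℕ) :
    Matrix.single (0 : Fin (n+1)) (0 : Fin (n+1)) c * (PP n F) ^ s
      = Matrix.single (0 : Fin (n+1)) (0 : Fin (n+1)) c := by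
  induction s with
  | zero => rw [pow_zero, mul_one]
  | succ s ih => rw [pow_succ, ← mul_assoc, ih, std_mul_PP]

lemma D_eq : PP n F - 1 = -((ZZ n F) * (PP n F)) := by
  rw [ZZPP]; abel

lemma D_pow (s : ℕ) :
    (PP n F - 1) ^ s = ((-1 : F) ^ s) • ((ZZ n F) ^ s * (PP n F) ^ s) := by
  have hc : Commute (ZZ n F) (PP n F) := comm_ZP
  rw [D_eq, neg_pow, hc.mul_pow]
  have hneg : (-1 : Matrix (Fin (n+1)) (Fin (n+1)) F) = (-1 : F) • 1 := by
    rw [neg_smul, one_smul]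
  rw [hneg, smul_pow, one_pow, smul_mul_assoc, one_mul]

lemma D_pow_top (s : ℕ) (hs : n + 1 ≤ s) : (PP n F - 1) ^ s = 0 := by
  rw [D_pow]
  have : (ZZ n F) ^ s = 0 := by
    calc (ZZ n F) ^ s = (ZZ n F) ^ (n+1) * (ZZ n F) ^ (s - (n+1)) := by
          rw [← pow_add]; congr 1; omega
    _ = 0 := by rw [ZZ_pow_top, zero_mul]
  rw [this, zero_mul, smul_zero]

lemma EE_transpose : (EE n F)ᵀ = EE n F := by
  ext i j
  simp only [EE, transpose_apply, Matrix.single, Matrix.of_apply, and_comm]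

/-- the key middle term -/
lemma key_term :
    (NN n F) ^ n * (EE n F * PP n F) * (PP n F - 1) ^ n
      = Matrix.single (0 : Fin (n+1)) (0 : Fin (n+1)) ((-1 : F) ^ n) := by
  rw [D_pow, mul_smul_comm]
  have h1 : EE n F * PP n F * ((ZZ n F) ^ n * (PP n F) ^ n)
      = EE n F * (ZZ n F) ^ n * (PP n F) ^ n := by
    rw [mul_assoc (EE n F) (PP n F), ← mul_assoc (PP n F), PP_mul_ZZn, ← mul_assoc, mul_assoc]
  rw [mul_assoc ((NN n F) ^ n), h1]
  rw [EE, ZZ_pow_n, single_mul_single_same, mul_one, NN_pow_n, ← mul_assoc,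
    single_mul_single_same, mul_one, std_mul_PP_pow]
  rw [smul_single, smul_eq_mul, mul_one]

end Size

lemma fromBlocks_pow {m : ℕ} (X B Y : Matrix (Fin m) (Fin m) F) (s : ℕ) :
    (fromBlocks X B (0 : Matrix (Fin m) (Fin m) F) Y) ^ s
      = fromBlocks (X ^ s) (∑ i ∈ Finset.range s, X ^ i * B * Y ^ (s - 1 - i)) 0 (Y ^ s) := by
  induction s with
  | zero =>
    simp [fromBlocks_one]
  | succ s ih =>
    rw [pow_succ, ih, fromBlocks_multiply]
    simp only [Matrix.mul_zero, Matrix.zero_mul, zero_add, add_zero]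
    have h1 : (∑ i ∈ Finset.range s, X ^ i * B * Y ^ (s - 1 - i)) * Y
        = ∑ i ∈ Finset.range s, X ^ i * B * Y ^ (s + 1 - 1 - i) := by
      rw [Finset.sum_mul]
      refine Finset.sum_congr rfl fun i hi => ?_
      rw [Finset.mem_range] at hi
      rw [mul_assoc, ← pow_succ]
      congr 2
      omega
    have h2 : X ^ s * B + (∑ i ∈ Finset.range s, X ^ i * B * Y ^ (s - 1 - i)) * Y
        = ∑ i ∈ Finset.range (s + 1), X ^ i * B * Y ^ (s + 1 - 1 - i) := by
      rw [h1, Finset.sum_range_succ, show s + 1 - 1 - s = 0 by omega, pow_zero, mul_one,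
        add_comm]
    rw [h2, ← pow_succ, ← pow_succ]


section Main
variable (n : ℕ) (F : Type) [Field F]

/-- our regular unipotent candidate -/
noncomputable def MM : Matrix (Fin (n+1) ⊕ Fin (n+1)) (Fin (n+1) ⊕ Fin (n+1)) F :=
  fromBlocks (1 + NN n F) (EE n F * PP n F) 0 (PP n F)

/-- its unipotent part -/
noncomputable def GG : Matrix (Fin (n+1) ⊕ Fin (n+1)) (Fin (n+1) ⊕ Fin (n+1)) F :=
  fromBlocks (NN n F) (EE n F * PP n F) 0 (PP n F - 1)

variable {n F}

lemma MM_eq : MM n F = 1 + GG n F := by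
  rw [MM, GG, ← fromBlocks_one, fromBlocks_add, zero_add, add_zero,
    show (1 : Matrix (Fin (n+1)) (Fin (n+1)) F) + (PP n F - 1) = PP n F from by abel]

lemma GG_pow_key : (GG n F) ^ (2 * n + 1)
    = fromBlocks 0 (Matrix.single (0 : Fin (n+1)) (0 : Fin (n+1)) ((-1 : F) ^ n)) 0 0 := by
  rw [GG, fromBlocks_pow]
  have hN : (NN n F) ^ (2 * n + 1) = 0 := by
    calc (NN n F) ^ (2 * n + 1) = (NN n F) ^ (n + 1) * (NN n F) ^ n := by
          rw [← pow_add]; congr 1; omega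
    _ = 0 := by rw [NN_pow_top, zero_mul]
  have hD : (PP n F - 1) ^ (2 * n + 1) = 0 := D_pow_top _ (by omega)
  have hzero : ∀ i ∈ Finset.range (2 * n + 1), i ≠ n →
      (NN n F) ^ i * (EE n F * PP n F) * (PP n F - 1) ^ (2 * n + 1 - 1 - i) = 0 := by
    intro i hi hne
    rw [Finset.mem_range] at hi
    rcases lt_or_gt_of_ne hne with h | h
    · rw [D_pow_top _ (by omega), mul_zero]
    · have : (NN n F) ^ i = 0 := by
        calc (NN n F) ^ i = (NN n F) ^ (n + 1) * (NN n F) ^ (i - (n+1)) := by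
              rw [← pow_add]; congr 1; omega
        _ = 0 := by rw [NN_pow_top, zero_mul]
      rw [this, zero_mul, zero_mul]
  have hsum := Finset.sum_eq_single_of_mem n (Finset.mem_range.mpr (by omega : n < 2 * n + 1)) hzero
  rw [hN, hD, hsum, show 2 * n + 1 - 1 - n = n by omega, key_term]

lemma GG_pow_zero : (GG n F) ^ (2 * n + 2) = 0 := by
  have : (GG n F) ^ (2 * n + 2) = (GG n F) ^ (2 * n + 1) * GG n F := by
    rw [← pow_succ]
  rw [this, GG_pow_key, GG, fromBlocks_multiply]
  have hstd : Matrix.single (0 : Fin (n+1)) (0 : Fin (n+1)) ((-1 : F) ^ n) * (PP n F - 1)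
      = 0 := by
    rw [D_eq, mul_neg, ← mul_assoc, std_mul_ZZ, zero_mul, neg_zero]
  simp only [Matrix.zero_mul, Matrix.mul_zero, zero_add, add_zero, hstd]
  exact fromBlocks_zero

lemma GG_key_ne_zero : (GG n F) ^ (2 * n + 1) ≠ 0 := by
  intro h
  rw [GG_pow_key] at h
  have h2 := congrFun (congrFun h (Sum.inl 0)) (Sum.inr 0)
  rw [fromBlocks_apply₁₂, Matrix.zero_apply] at h2
  rw [Matrix.single, Matrix.of_apply, if_pos ⟨rfl, rfl⟩] at h2
  exact pow_ne_zero n (neg_ne_zero.mpr one_ne_zero) h2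


lemma MM_mem : MM n F ∈ Matrix.symplecticGroup (Fin (n+1)) F := by
  rw [SymplecticGroup.mem_iff, Matrix.J, MM]
  have hBAt : (EE n F * PP n F) * ((1 : Matrix (Fin (n+1)) (Fin (n+1)) F) + ZZ n F) = EE n F := by
    rw [mul_assoc, PP_mul, mul_one]
  have hABt : ((1 : Matrix (Fin (n+1)) (Fin (n+1)) F) + NN n F) * (EE n F * PP n F)ᵀ
      = EE n F := by
    rw [transpose_mul, ← mul_assoc, mul_PPt, one_mul, EE_transpose]
  rw [fromBlocks_transpose, fromBlocks_multiply, fromBlocks_multiply]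
  rw [transpose_zero, transpose_add, transpose_one, ← ZZ]
  simp only [Matrix.mul_zero, Matrix.mul_one, Matrix.mul_neg, Matrix.zero_mul,
    zero_add, add_zero, Matrix.neg_mul, transpose_zero, neg_zero]
  rw [hBAt, hABt, add_neg_cancel, mul_PPt, PP_mul]

lemma pow_card_eq_zero_of_isNilpotent {I : Type} [DecidableEq I] [Fintype I]
    (M : Matrix I I F) (h : IsNilpotent M) : M ^ Fintype.card I = 0 := by
  have h1 := Matrix.isNilpotent_charpoly_sub_pow_of_isNilpotent h
  have h2 : M.charpoly = Polynomial.X ^ Fintype.card I := by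
    rw [← sub_eq_zero]
    exact IsNilpotent.eq_zero h1
  have h3 := Matrix.aeval_self_charpoly M
  rw [h2] at h3
  simpa using h3

end Main
end SpExpAux

/-- Let `q = p^k` be a power of the prime `p`, `m ≥ 1`, and let `a` be the least
natural number with `p^a > 2m - 1`. Then the `p`-part of the exponent of
`Sp_{2m}(F_q)` is `p^a`. -/
theorem exponent_p_part_symplecticGroup_natural_char (p k q : ℕ) (hp : p.Prime)
    (hk : 1 ≤ k) (hq : q = p ^ k)
    (F : Type) [Field F] [Fintype F] (hF : Fintype.card F = q)
    (m a : ℕ) (hm : 1 ≤ m)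
    (ha : 2 * m - 1 < p ^ a ∧ ∀ b : ℕ, 2 * m - 1 < p ^ b → a ≤ b) :
    p ^ a ∣ Monoid.exponent (Matrix.symplecticGroup (Fin m) F) ∧
      ¬ p ^ (a + 1) ∣ Monoid.exponent (Matrix.symplecticGroup (Fin m) F) := by
  classical
  haveI hpfact : Fact p.Prime := ⟨hp⟩
  -- characteristic of F is p
  haveI hcF : CharP F (ringChar F) := ringChar.charP F
  obtain ⟨nn, hrprime, hcard⟩ := FiniteField.card F (ringChar F)
  have hpq : p = ringChar F := by
    have h1 : p ∣ (ringChar F) ^ (nn : ℕ) := by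
      rw [← hcard, hF, hq]
      exact dvd_pow_self p (by omega)
    exact (Nat.prime_dvd_prime_iff_eq hp hrprime).mp (hp.dvd_of_dvd_pow h1)
  haveI hFp : CharP F p := by rw [hpq]; exact hcF
  obtain ⟨n, rfl⟩ : ∃ n, m = n + 1 := ⟨m - 1, by omega⟩
  haveI : Nonempty (Fin (n+1) ⊕ Fin (n+1)) := ⟨Sum.inl 0⟩
  haveI : CharP (Matrix (Fin (n+1) ⊕ Fin (n+1)) (Fin (n+1) ⊕ Fin (n+1)) F) p :=
    Matrix.charP p
  obtain ⟨h1, h2⟩ := ha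
  have hage1 : 1 ≤ a := by
    rcases Nat.eq_zero_or_pos a with h | h
    · rw [h, pow_zero] at h1; omega
    · exact h
  have hpa : 2 * (n + 1) ≤ p ^ a := by omega
  have hpa1 : p ^ (a - 1) ≤ 2 * n + 1 := by
    by_contra hcon
    have := h2 (a - 1) (by omega)
    omega
  -- the regular unipotent element
  set x : Matrix.symplecticGroup (Fin (n+1)) F := ⟨SpExpAux.MM n F, SpExpAux.MM_mem⟩ with hx
  have hGa : (SpExpAux.GG n F) ^ (p ^ a) = 0 := by
    have h3 : (SpExpAux.GG n F) ^ (p ^ a)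
        = (SpExpAux.GG n F) ^ (2 * n + 2) * (SpExpAux.GG n F) ^ (p ^ a - (2 * n + 2)) := by
      rw [← pow_add]; congr 1; omega
    rw [h3, SpExpAux.GG_pow_zero, zero_mul]
  have hMpow : ∀ t : ℕ, (SpExpAux.MM n F) ^ (p ^ t) = 1 + (SpExpAux.GG n F) ^ (p ^ t) := by
    intro t
    rw [SpExpAux.MM_eq,
      add_pow_char_pow_of_commute _ _ (Commute.one_left (SpExpAux.GG n F)), one_pow]
  have hxa : x ^ (p ^ a) = 1 := by
    apply Subtype.ext
    rw [SubmonoidClass.coe_pow]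
    show (SpExpAux.MM n F) ^ (p ^ a) = 1
    rw [hMpow a, hGa, add_zero]
  have hxa1 : x ^ (p ^ (a - 1)) ≠ 1 := by
    intro hcon
    have hcon' : (SpExpAux.MM n F) ^ (p ^ (a - 1)) = 1 := by
      have := congrArg (Subtype.val) hcon
      rwa [SubmonoidClass.coe_pow] at this
    rw [hMpow (a - 1)] at hcon'
    have hzero : (SpExpAux.GG n F) ^ (p ^ (a - 1)) = 0 := by
      have h5 : (1 : Matrix (Fin (n+1) ⊕ Fin (n+1)) (Fin (n+1) ⊕ Fin (n+1)) F)
          + (SpExpAux.GG n F) ^ (p ^ (a - 1)) = 1 + 0 := by rw [add_zero]; exact hcon'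
      exact add_left_cancel h5
    have h6 : (SpExpAux.GG n F) ^ (2 * n + 1) = 0 := by
      have h7 : (SpExpAux.GG n F) ^ (2 * n + 1)
          = (SpExpAux.GG n F) ^ (p ^ (a - 1))
            * (SpExpAux.GG n F) ^ (2 * n + 1 - p ^ (a - 1)) := by
        rw [← pow_add]; congr 1; omega
      rw [h7, hzero, zero_mul]
    exact SpExpAux.GG_key_ne_zero h6
  have hord : orderOf x = p ^ a := by
    have := orderOf_eq_prime_pow (x := x) (n := a - 1) hxa1
      (by rw [show a - 1 + 1 = a by omega]; exact hxa)
    rwa [show a - 1 + 1 = a by omega] at this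
  constructor
  · rw [← hord]
    exact Monoid.order_dvd_exponent x
  · intro hdvd
    have hexp0 : Monoid.exponent (Matrix.symplecticGroup (Fin (n+1)) F) ≠ 0 :=
      Monoid.exponent_ne_zero_of_finite
    obtain ⟨g, hg⟩ := hp.exists_orderOf_eq_pow_factorization_exponent
      (G := Matrix.symplecticGroup (Fin (n+1)) F)
    set t := (Monoid.exponent (Matrix.symplecticGroup (Fin (n+1)) F)).factorization p with ht
    have hat : a + 1 ≤ t := (Nat.Prime.pow_dvd_iff_le_factorization hp hexp0).mp hdvd
    set X : Matrix (Fin (n+1) ⊕ Fin (n+1)) (Fin (n+1) ⊕ Fin (n+1)) F := g.val with hX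
    have hXord : orderOf X = p ^ t := by
      rw [hX, orderOf_submonoid]; exact hg
    have hXpow : X ^ (p ^ t) = 1 := by rw [← hXord]; exact pow_orderOf_eq_one X
    have hnil : IsNilpotent (X - 1) := by
      refine ⟨p ^ t, ?_⟩
      rw [sub_pow_char_pow_of_commute p t (Commute.one_right X), hXpow, one_pow, sub_self]
    have hcard2 : Fintype.card (Fin (n+1) ⊕ Fin (n+1)) = 2 * (n + 1) := by
      rw [Fintype.card_sum, Fintype.card_fin]; omega
    have hY := SpExpAux.pow_card_eq_zero_of_isNilpotent (X - 1) hnil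
    rw [hcard2] at hY
    have hYa : (X - 1) ^ (p ^ a) = 0 := by
      have h3 : (X - 1) ^ (p ^ a) = (X - 1) ^ (2 * (n + 1)) * (X - 1) ^ (p ^ a - 2 * (n + 1)) := by
        rw [← pow_add]; congr 1; omega
      rw [h3, hY, zero_mul]
    have hXa : X ^ (p ^ a) = 1 := by
      have h4 := sub_pow_char_pow_of_commute p a (Commute.one_right X)
      rw [hYa, one_pow, eq_comm, sub_eq_zero] at h4
      exact h4
    have hdvd2 : orderOf X ∣ p ^ a := orderOf_dvd_of_pow_eq_one hXa
    rw [hXord] at hdvd2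
    have hta : t ≤ a := (Nat.pow_dvd_pow_iff_le_right hp.one_lt).mp hdvd2
    omega
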